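/- Model Gradient identity (finite-state version): Let V_m^θ be the unique fixed point of the Bellman operator T_θ V(s) = Σ_{a} μ(a|s) Σ_{s',r} P_θ(s',r|s,a)[r + γV(s')] on a finite MDP with P_θ positive and differentiable in a real parameter θ. Then ∇_θ V_m^θ(s) = Σ_{s'} d_θ(s,s') Σ_{a'} μ(a'|s') Σ_{s'',r'} P_θ(s'',r'|s',a') (r' + γ V_m^θ(s'')) ∇_θ log P_θ(s'',r'|s',a'), where d_θ(s,s') = Σ_{t=0}^∞ γ^t (P_θ^μ)^t(s,s') is the discounted occupancy. -/

import Mathlib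

open Matrix

lemma stochastic_geom {S : Type*} [Fintype S] [DecidableEq S] [Nonempty S]
    (γ : ℝ) (hγ0 : 0 ≤ γ) (hγ1 : γ < 1) (A : Matrix S S ℝ)
    (h0 : ∀ i j, 0 ≤ A i j) (h1 : ∀ i, ∑ j, A i j = 1) :
    IsUnit (1 - γ • A) ∧
      ∀ i j, HasSum (fun t : ℕ => γ ^ t * (A ^ t) i j) ((1 - γ • A)⁻¹ i j) := by
  letI : SeminormedRing (Matrix S S ℝ) := Matrix.linftyOpSemiNormedRing
  letI : NormedRing (Matrix S S ℝ) := Matrix.linftyOpNormedRing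
  letI : NormedAlgebra ℝ (Matrix S S ℝ) := Matrix.linftyOpNormedAlgebra
  have hnormA : ‖A‖ ≤ 1 := by
    rw [Matrix.linfty_opNorm_def]
    have : ((Finset.univ : Finset S).sup fun i : S => ∑ j : S, ‖A i j‖₊) ≤ 1 := by
      apply Finset.sup_le
      intro i _
      have : ((∑ j : S, ‖A i j‖₊ : NNReal) : ℝ) ≤ 1 := by
        push_cast
        have h : ∑ j : S, ‖A i j‖ = 1 := by
          rw [← h1 i]
          refine Finset.sum_congr rfl fun j _ => ?_
          rw [Real.norm_eq_abs, abs_of_nonneg (h0 i j)]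
        linarith [h]
      exact_mod_cast this
    exact_mod_cast this
  have hnorm : ‖γ • A‖ < 1 := by
    calc ‖γ • A‖ ≤ ‖γ‖ * ‖A‖ := norm_smul_le γ A
      _ ≤ γ * 1 := by
          rw [Real.norm_eq_abs, abs_of_nonneg hγ0]
          exact mul_le_mul_of_nonneg_left hnormA hγ0
      _ < 1 := by linarith
  have hunit : IsUnit ((1 : Matrix S S ℝ) - γ • A) := isUnit_one_sub_of_norm_lt_one hnorm
  refine ⟨hunit, fun i j => ?_⟩
  have hsum : HasSum (fun n : ℕ => (γ • A) ^ n) (Ring.inverse (1 - γ • A)) :=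
    hasSum_geom_series_inverse _ hnorm
  have hbound : ∀ B : Matrix S S ℝ, ‖B i j‖ ≤ 1 * ‖B‖ := by
    intro B
    rw [one_mul]
    have h₁ : ‖B i j‖₊ ≤ ∑ j' : S, ‖B i j'‖₊ :=
      Finset.single_le_sum (f := fun j' => ‖B i j'‖₊) (fun _ _ => zero_le)
        (Finset.mem_univ j)
    have h₂ : (∑ j' : S, ‖B i j'‖₊) ≤ ‖B‖₊ := by
      rw [Matrix.linfty_opNNNorm_def]
      exact Finset.le_sup (f := fun i => ∑ j : S, ‖B i j‖₊) (Finset.mem_univ i)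
    exact_mod_cast h₁.trans h₂
  let L : Matrix S S ℝ →ₗ[ℝ] ℝ :=
    { toFun := fun B => B i j, map_add' := fun _ _ => rfl, map_smul' := fun _ _ => rfl }
  let Lc : Matrix S S ℝ →L[ℝ] ℝ := L.mkContinuous 1 hbound
  have := Lc.hasSum hsum
  have heq : (fun n : ℕ => Lc ((γ • A) ^ n)) = fun n : ℕ => γ ^ n * (A ^ n) i j := by
    funext n
    show ((γ • A) ^ n) i j = _
    rw [smul_pow]
    simp [Matrix.smul_apply]
  rw [heq] at this
  have : HasSum (fun n : ℕ => γ ^ n * (A ^ n) i j) (Ring.inverse (1 - γ • A) i j) := this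
  rwa [← Matrix.nonsing_inv_eq_ringInverse] at this

lemma diffAt_finset_prod {ι : Type*} (u : Finset ι) (f : ι → ℝ → ℝ) {θ : ℝ}
    (h : ∀ i ∈ u, DifferentiableAt ℝ (f i) θ) :
    DifferentiableAt ℝ (fun t => ∏ i ∈ u, f i t) θ := by
  classical
  induction u using Finset.induction_on with
  | empty => simp
  | @insert a u ha ih =>
      simp only [Finset.prod_insert ha]
      exact (h a (Finset.mem_insert_self a u)).mul
        (ih fun i hi => h i (Finset.mem_insert_of_mem hi))

lemma diffAt_det {S : Type*} [Fintype S] [DecidableEq S] (f : ℝ → Matrix S S ℝ) {θ : ℝ}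
    (h : ∀ i j, DifferentiableAt ℝ (fun t => f t i j) θ) :
    DifferentiableAt ℝ (fun t => (f t).det) θ := by
  simp only [Matrix.det_apply']
  exact DifferentiableAt.fun_sum fun σ _ =>
    (diffAt_finset_prod Finset.univ (fun i t => f t (σ i) i)
      (fun i _ => h (σ i) i)).const_mul _

lemma sum_rearrange {A S R : Type*} [Fintype A] [Fintype S] [Fintype R]
    (μ : A → ℝ) (q : A → S × R → ℝ) (v : S → ℝ) :
    ∑ a, μ a * ∑ x : S × R, q a x * v x.1
      = ∑ s' : S, (∑ a, μ a * ∑ r : R, q a (s', r)) * v s' := by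
  simp_rw [Fintype.sum_prod_type, Finset.sum_mul, Finset.mul_sum]
  rw [Finset.sum_comm]
  refine Finset.sum_congr rfl fun s' _ => Finset.sum_congr rfl fun a _ => ?_
  rw [Finset.sum_mul]
  refine Finset.sum_congr rfl fun r _ => ?_
  ring

/-- Model Gradient identity (finite-state version). -/
theorem model_gradient_identity
    {S A R : Type*} [Fintype S] [DecidableEq S] [Nonempty S] [Fintype A] [Fintype R]
    (γ : ℝ) (hγ0 : 0 ≤ γ) (hγ1 : γ < 1)
    (μ : S → A → ℝ) (hμ0 : ∀ s a, 0 ≤ μ s a) (hμ1 : ∀ s, ∑ a, μ s a = 1)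
    (rew : R → ℝ)
    (p p' : ℝ → S → A → S × R → ℝ)
    (hpos : ∀ θ s a x, 0 < p θ s a x)
    (hsum : ∀ θ s a, ∑ x, p θ s a x = 1)
    (hder : ∀ θ s a x, HasDerivAt (fun t => p t s a x) (p' θ s a x) θ)
    (Vm : ℝ → S → ℝ)
    (hVm : ∀ θ s, Vm θ s =
      ∑ a, μ s a * ∑ x : S × R, p θ s a x * (rew x.2 + γ * Vm θ x.1))
    (Pμ : ℝ → Matrix S S ℝ)
    (hPμ : ∀ θ s s', Pμ θ s s' = ∑ a, μ s a * ∑ r : R, p θ s a (s', r))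
    (d : ℝ → S → S → ℝ)
    (hd : ∀ θ s s', d θ s s' = ∑' t : ℕ, γ ^ t * (Pμ θ ^ t) s s')
    (θ : ℝ) (s : S) :
    HasDerivAt (fun t => Vm t s)
      (∑ s', d θ s s' * ∑ a', μ s' a' *
        ∑ x : S × R,
          p θ s' a' x * (rew x.2 + γ * Vm θ x.1) * (p' θ s' a' x / p θ s' a' x)) θ := by
  classical
  set c : ℝ → S → ℝ := fun t s0 => ∑ a, μ s0 a * ∑ x : S × R, p t s0 a x * rew x.2 with hc
  set M : ℝ → Matrix S S ℝ := fun t => 1 - γ • Pμ t with hM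
  set g : S → ℝ :=
    fun s0 => ∑ a, μ s0 a * ∑ x : S × R, p' θ s0 a x * (rew x.2 + γ * Vm θ x.1) with hg
  -- stochasticity of Pμ
  have hPμ0 : ∀ t i j, 0 ≤ Pμ t i j := by
    intro t i j
    rw [hPμ]
    exact Finset.sum_nonneg fun a _ => mul_nonneg (hμ0 i a)
      (Finset.sum_nonneg fun r _ => (hpos t i a (j, r)).le)
  have hPμ1 : ∀ t i, ∑ j, Pμ t i j = 1 := by
    intro t i
    simp_rw [hPμ]
    rw [Finset.sum_comm]
    have : ∀ a, ∑ j : S, μ i a * ∑ r : R, p t i a (j, r) = μ i a := by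
      intro a
      rw [← Finset.mul_sum]
      have : ∑ j : S, ∑ r : R, p t i a (j, r) = 1 := by
        rw [← Fintype.sum_prod_type]
        exact hsum t i a
      rw [this, mul_one]
    simp_rw [this]
    exact hμ1 i
  have hgeom : ∀ t, IsUnit (M t) ∧
      ∀ i j, HasSum (fun n : ℕ => γ ^ n * (Pμ t ^ n) i j) ((M t)⁻¹ i j) := fun t =>
    stochastic_geom γ hγ0 hγ1 (Pμ t) (hPμ0 t) (hPμ1 t)
  have hMdet : ∀ t, IsUnit (M t).det := fun t =>
    (Matrix.isUnit_iff_isUnit_det _).mp (hgeom t).1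
  -- Bellman equation in linear form
  have hBellman : ∀ t s0, Vm t s0 = c t s0 + γ * ∑ s', Pμ t s0 s' * Vm t s' := by
    intro t s0
    rw [hVm t s0]
    have expand : ∀ a, ∑ x : S × R, p t s0 a x * (rew x.2 + γ * Vm t x.1)
        = (∑ x : S × R, p t s0 a x * rew x.2)
          + ∑ x : S × R, p t s0 a x * (γ * Vm t x.1) := by
      intro a
      rw [← Finset.sum_add_distrib]
      exact Finset.sum_congr rfl fun x _ => by ring
    simp_rw [expand, mul_add, Finset.sum_add_distrib]
    congr 1
    have := sum_rearrange (μ s0) (fun a x => p t s0 a x) (fun s' => γ * Vm t s')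
    rw [this, Finset.mul_sum]
    refine Finset.sum_congr rfl fun s' _ => ?_
    rw [hPμ]
    ring
  have hMv : ∀ t, (M t) *ᵥ (Vm t) = c t := by
    intro t
    funext s0
    simp only [hM, Matrix.sub_mulVec, Matrix.smul_mulVec, Matrix.one_mulVec,
      Pi.sub_apply, Pi.smul_apply, smul_eq_mul]
    have : (Pμ t *ᵥ Vm t) s0 = ∑ s', Pμ t s0 s' * Vm t s' := by
      simp [Matrix.mulVec, dotProduct]
    rw [this]
    have := hBellman t s0
    linarith [this]
  have hVformula : ∀ t s0, Vm t s0 = ∑ s', (M t)⁻¹ s0 s' * c t s' := by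
    intro t s0
    have : Vm t = (M t)⁻¹ *ᵥ c t := by
      rw [← hMv t, Matrix.mulVec_mulVec, Matrix.nonsing_inv_mul _ (hMdet t),
        Matrix.one_mulVec]
    rw [this]
    simp [Matrix.mulVec, dotProduct]
  -- differentiability
  have hPμd : ∀ i j, HasDerivAt (fun t => Pμ t i j)
      (∑ a, μ i a * ∑ r : R, p' θ i a (j, r)) θ := by
    intro i j
    have : (fun t => Pμ t i j) = fun t => ∑ a, μ i a * ∑ r : R, p t i a (j, r) :=
      funext fun t => hPμ t i j
    rw [this]
    exact HasDerivAt.fun_sum fun a _ =>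
      (HasDerivAt.fun_sum fun r _ => hder θ i a (j, r)).const_mul (μ i a)
  have hMdiff : ∀ i j, DifferentiableAt ℝ (fun t => M t i j) θ := by
    intro i j
    have : (fun t => M t i j) = fun t => (1 : Matrix S S ℝ) i j - γ * Pμ t i j := by
      funext t
      simp [hM, Matrix.sub_apply, Matrix.smul_apply]
    rw [this]
    exact (differentiableAt_const _).sub ((hPμd i j).differentiableAt.const_mul γ)
  have hdetdiff : DifferentiableAt ℝ (fun t => (M t).det) θ := diffAt_det M hMdiff
  have hadjdiff : ∀ i j, DifferentiableAt ℝ (fun t => (M t).adjugate i j) θ := by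
    intro i j
    simp only [Matrix.adjugate_apply]
    refine diffAt_det (fun t => (M t).updateRow j (Pi.single i 1)) fun k l => ?_
    by_cases hk : k = j
    · simp [Matrix.updateRow_apply, hk]
    · simp only [Matrix.updateRow_apply, if_neg hk]
      exact hMdiff k l
  have hdetne : (M θ).det ≠ 0 := (hMdet θ).ne_zero
  have hinvdiff : ∀ i j, DifferentiableAt ℝ (fun t => (M t)⁻¹ i j) θ := by
    intro i j
    have : (fun t => (M t)⁻¹ i j) = fun t => ((M t).det)⁻¹ * (M t).adjugate i j := by
      funext t
      rw [Matrix.inv_def, Matrix.smul_apply, smul_eq_mul, Ring.inverse_eq_inv']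
    rw [this]
    exact (hdetdiff.inv hdetne).mul (hadjdiff i j)
  have hcdiff : ∀ s0, DifferentiableAt ℝ (fun t => c t s0) θ := by
    intro s0
    refine DifferentiableAt.fun_sum fun a _ => DifferentiableAt.const_mul ?_ _
    exact DifferentiableAt.fun_sum fun x _ => (hder θ s0 a x).differentiableAt.mul_const _
  have hVdiff : ∀ s0, DifferentiableAt ℝ (fun t => Vm t s0) θ := by
    intro s0
    have : (fun t => Vm t s0) = fun t => ∑ s', (M t)⁻¹ s0 s' * c t s' :=
      funext fun t => hVformula t s0
    rw [this]
    exact DifferentiableAt.fun_sum fun s' _ => (hinvdiff s0 s').mul (hcdiff s')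
  set D : S → ℝ := fun s0 => deriv (fun t => Vm t s0) θ with hDdef
  have hD : ∀ s0, HasDerivAt (fun t => Vm t s0) (D s0) θ := fun s0 =>
    (hVdiff s0).hasDerivAt
  -- differentiate the Bellman equation
  have hDeq : ∀ s0, D s0 = ∑ a, μ s0 a *
      ∑ x : S × R, (p' θ s0 a x * (rew x.2 + γ * Vm θ x.1)
        + p θ s0 a x * (γ * D x.1)) := by
    intro s0
    have hRHS : HasDerivAt
        (fun t => ∑ a, μ s0 a * ∑ x : S × R, p t s0 a x * (rew x.2 + γ * Vm t x.1))
        (∑ a, μ s0 a * ∑ x : S × R, (p' θ s0 a x * (rew x.2 + γ * Vm θ x.1)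
          + p θ s0 a x * (γ * D x.1))) θ := by
      refine HasDerivAt.fun_sum fun a _ => HasDerivAt.const_mul _ ?_
      refine HasDerivAt.fun_sum fun x _ => ?_
      exact (hder θ s0 a x).mul (((hD x.1).const_mul γ).const_add (rew x.2))
    have hfe : (fun t => ∑ a, μ s0 a * ∑ x : S × R, p t s0 a x * (rew x.2 + γ * Vm t x.1))
        = fun t => Vm t s0 := funext fun t => (hVm t s0).symm
    rw [hfe] at hRHS
    exact (hD s0).unique hRHS
  have hMD : ∀ s0, D s0 = g s0 + γ * ∑ s', Pμ θ s0 s' * D s' := by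
    intro s0
    rw [hDeq s0]
    have expand : ∀ a, ∑ x : S × R, (p' θ s0 a x * (rew x.2 + γ * Vm θ x.1)
          + p θ s0 a x * (γ * D x.1))
        = (∑ x : S × R, p' θ s0 a x * (rew x.2 + γ * Vm θ x.1))
          + ∑ x : S × R, p θ s0 a x * (γ * D x.1) :=
      fun a => Finset.sum_add_distrib
    have split : (∑ a, μ s0 a * ∑ x : S × R, (p' θ s0 a x * (rew x.2 + γ * Vm θ x.1)
          + p θ s0 a x * (γ * D x.1)))
        = g s0 + ∑ a, μ s0 a * ∑ x : S × R, p θ s0 a x * (γ * D x.1) := by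
      rw [hg, ← Finset.sum_add_distrib]
      refine Finset.sum_congr rfl fun a _ => ?_
      rw [expand a]
      ring
    rw [split]
    congr 1
    have := sum_rearrange (μ s0) (fun a x => p θ s0 a x) (fun s' => γ * D s')
    rw [this, Finset.mul_sum]
    refine Finset.sum_congr rfl fun s' _ => ?_
    rw [hPμ]
    ring
  -- solve for D
  have hDsolve : D s = ∑ s', (M θ)⁻¹ s s' * g s' := by
    have hMvD : (M θ) *ᵥ D = g := by
      funext s0
      simp only [hM, Matrix.sub_mulVec, Matrix.smul_mulVec, Matrix.one_mulVec,
        Pi.sub_apply, Pi.smul_apply, smul_eq_mul]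
      have : (Pμ θ *ᵥ D) s0 = ∑ s', Pμ θ s0 s' * D s' := by
        simp [Matrix.mulVec, dotProduct]
      rw [this]
      have := hMD s0
      linarith [this]
    have : D = (M θ)⁻¹ *ᵥ g := by
      rw [← hMvD, Matrix.mulVec_mulVec, Matrix.nonsing_inv_mul _ (hMdet θ),
        Matrix.one_mulVec]
    rw [this]
    simp [Matrix.mulVec, dotProduct]
  -- identify the target with D s
  have htarget : (∑ s', d θ s s' * ∑ a', μ s' a' *
      ∑ x : S × R, p θ s' a' x * (rew x.2 + γ * Vm θ x.1) * (p' θ s' a' x / p θ s' a' x))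
      = D s := by
    rw [hDsolve]
    refine Finset.sum_congr rfl fun s' _ => ?_
    have hdM : d θ s s' = (M θ)⁻¹ s s' := by
      rw [hd]
      exact ((hgeom θ).2 s s').tsum_eq
    have hgG : (∑ a', μ s' a' * ∑ x : S × R,
        p θ s' a' x * (rew x.2 + γ * Vm θ x.1) * (p' θ s' a' x / p θ s' a' x)) = g s' := by
      refine Finset.sum_congr rfl fun a' _ => ?_
      congr 1
      refine Finset.sum_congr rfl fun x _ => ?_
      have hne : p θ s' a' x ≠ 0 := (hpos θ s' a' x).ne'
      field_simp
    rw [hdM, hgG]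
  rw [htarget]
  exact hD s
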